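/- For a 1 × L laptop (L > 1) centered at the corner of a quarter-plane at angle θ to the diagonal position, the footprint area is a continuous function of θ that attains its strict minimum 1/4 at the symmetric position and is strictly larger for all other angles in a neighborhood where the footprint stays a triangle. -/

import Mathlib

open Real MeasureTheory

/-- The rectangle of width 1 and length `L`, centered at the origin and rotated by `θ`
(width measured across the first rotated coordinate, so `θ = π/4` is the symmetric
diagonal position over the quarter-plane `Q` below). -/
def rect (θ L : ℝ) : Set (ℝ × ℝ) :=
  {p | |Real.cos θ * p.1 + Real.sin θ * p.2| ≤ 1 / 2 ∧
       |(-Real.sin θ) * p.1 + Real.cos θ * p.2| ≤ L / 2}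

/-- The quarter-plane modeling the table corner. -/
def Q : Set (ℝ × ℝ) := {p | p.1 ≤ 0 ∧ p.2 ≤ 0}

noncomputable def rotMap (θ : ℝ) : ℝ × ℝ →ₗ[ℝ] ℝ × ℝ where
  toFun p := (Real.cos θ * p.1 + Real.sin θ * p.2, -Real.sin θ * p.1 + Real.cos θ * p.2)
  map_add' p q := by simp [Prod.ext_iff]; constructor <;> ring
  map_smul' c p := by simp [Prod.ext_iff, smul_eq_mul]; constructor <;> ring

lemma det_rotMap (θ : ℝ) : LinearMap.det (rotMap θ) = 1 := by
  rw [← LinearMap.det_toMatrix (Module.Basis.finTwoProd ℝ)]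
  rw [Matrix.det_fin_two]
  simp [LinearMap.toMatrix_apply, rotMap]
  nlinarith [Real.sin_sq_add_cos_sq θ]

def Kbox (L : ℝ) : Set (ℝ × ℝ) := {p | |p.1| ≤ 1/2 ∧ |p.2| ≤ L/2}

def Cone (θ : ℝ) : Set (ℝ × ℝ) :=
  {q | Real.cos θ * q.1 - Real.sin θ * q.2 ≤ 0 ∧ Real.sin θ * q.1 + Real.cos θ * q.2 ≤ 0}

lemma measurableSet_Kbox (L : ℝ) : MeasurableSet (Kbox L) := by
  unfold Kbox
  rw [Set.setOf_and]
  exact (measurableSet_le (by fun_prop) measurable_const).inter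
    (measurableSet_le (by fun_prop) measurable_const)

lemma measurableSet_Cone (θ : ℝ) : MeasurableSet (Cone θ) := by
  unfold Cone
  rw [Set.setOf_and]
  exact (measurableSet_le (by fun_prop) measurable_const).inter
    (measurableSet_le (by fun_prop) measurable_const)

lemma rect_inter_Q_eq (θ L : ℝ) : rect θ L ∩ Q = (rotMap θ) ⁻¹' (Kbox L ∩ Cone θ) := by
  ext p
  simp only [rect, Q, Kbox, Cone, Set.mem_inter_iff, Set.mem_setOf_eq, Set.mem_preimage, rotMap,
    LinearMap.coe_mk, AddHom.coe_mk]
  constructor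
  · rintro ⟨⟨h1, h2⟩, h3, h4⟩
    refine ⟨⟨h1, h2⟩, ?_, ?_⟩
    · have : Real.cos θ * (Real.cos θ * p.1 + Real.sin θ * p.2) -
          Real.sin θ * (-Real.sin θ * p.1 + Real.cos θ * p.2) = p.1 := by
        nlinarith [Real.sin_sq_add_cos_sq θ]
      rw [this]; exact h3
    · have : Real.sin θ * (Real.cos θ * p.1 + Real.sin θ * p.2) +
          Real.cos θ * (-Real.sin θ * p.1 + Real.cos θ * p.2) = p.2 := by
        nlinarith [Real.sin_sq_add_cos_sq θ]
      rw [this]; exact h4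
  · rintro ⟨⟨h1, h2⟩, h3, h4⟩
    refine ⟨⟨h1, h2⟩, ?_, ?_⟩
    · nlinarith [Real.sin_sq_add_cos_sq θ]
    · nlinarith [Real.sin_sq_add_cos_sq θ]

lemma vol_frame (θ L : ℝ) : volume (rect θ L ∩ Q) = volume (Kbox L ∩ Cone θ) := by
  rw [rect_inter_Q_eq]
  rw [Measure.addHaar_preimage_linearMap volume (by rw [det_rotMap]; norm_num)]
  rw [det_rotMap]
  norm_num

-- measure preserving: (x,y) ↦ (x,-y)
lemma mp_reflY : MeasurePreserving (fun p : ℝ × ℝ => (p.1, -p.2)) volume volume := by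
  rw [Measure.volume_eq_prod]
  exact (MeasurePreserving.id volume).prod (Measure.measurePreserving_neg volume)

lemma mp_neg : MeasurePreserving (fun p : ℝ × ℝ => (-p.1, -p.2)) volume volume := by
  rw [Measure.volume_eq_prod]
  exact (Measure.measurePreserving_neg volume).prod (Measure.measurePreserving_neg volume)

-- rotation by -π/2 : (x,y) ↦ (y,-x)
lemma mp_rot : MeasurePreserving (fun p : ℝ × ℝ => (p.2, -p.1)) volume volume := by
  rw [Measure.volume_eq_prod]
  have h1 : MeasurePreserving (Prod.swap : ℝ × ℝ → ℝ × ℝ)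
      ((volume : Measure ℝ).prod volume) ((volume : Measure ℝ).prod volume) :=
    Measure.measurePreserving_swap
  have h2 := (MeasurePreserving.id (volume : Measure ℝ)).prod
      (Measure.measurePreserving_neg (volume : Measure ℝ))
  exact h2.comp h1

lemma line_null (a b c : ℝ) (h : a ≠ 0 ∨ b ≠ 0) :
    volume {p : ℝ × ℝ | a * p.1 + b * p.2 = c} = 0 := by
  by_cases hb : b ≠ 0
  · have hm : MeasurableSet {p : ℝ × ℝ | a * p.1 + b * p.2 = c} :=
      measurableSet_eq_fun (by fun_prop) measurable_const
    rw [Measure.volume_eq_prod, Measure.prod_apply hm]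
    have : ∀ x : ℝ, (volume (Prod.mk x ⁻¹' {p : ℝ × ℝ | a * p.1 + b * p.2 = c})) = 0 := by
      intro x
      have : Prod.mk x ⁻¹' {p : ℝ × ℝ | a * p.1 + b * p.2 = c} = {(c - a * x) / b} := by
        ext y
        simp only [Set.mem_preimage, Set.mem_setOf_eq, Set.mem_singleton_iff]
        constructor
        · intro hy; field_simp; linarith
        · intro hy; rw [hy]; field_simp; ring
      rw [this]; exact measure_singleton _
    simp only [Set.preimage_setOf_eq] at this
    simp [this]
  · push_neg at hb
    have ha : a ≠ 0 := by tauto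
    subst hb
    have : {p : ℝ × ℝ | a * p.1 + 0 * p.2 = c} = ({c / a} : Set ℝ) ×ˢ (Set.univ : Set ℝ) := by
      ext p
      simp only [Set.mem_setOf_eq, Set.mem_prod, Set.mem_singleton_iff, Set.mem_univ, and_true]
      constructor
      · intro hp; field_simp; linarith
      · intro hp; rw [hp]; field_simp; ring
    rw [this, Measure.volume_eq_prod, Measure.prod_prod]
    simp


lemma F_periodic (L θ : ℝ) :
    volume (Kbox L ∩ Cone (θ + π)) = volume (Kbox L ∩ Cone θ) := by
  have hset : Kbox L ∩ Cone (θ + π) =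
      (fun p : ℝ × ℝ => (-p.1, -p.2)) ⁻¹' (Kbox L ∩ Cone θ) := by
    ext q
    simp only [Kbox, Cone, Set.mem_inter_iff, Set.mem_setOf_eq, Set.mem_preimage,
      Real.cos_add_pi, Real.sin_add_pi, abs_neg]
    constructor
    · rintro ⟨⟨h1, h2⟩, h3, h4⟩
      exact ⟨⟨h1, h2⟩, by linarith, by linarith⟩
    · rintro ⟨⟨h1, h2⟩, h3, h4⟩
      exact ⟨⟨h1, h2⟩, by linarith, by linarith⟩
  rw [hset, mp_neg.measure_preimage
    ((measurableSet_Kbox L).inter (measurableSet_Cone θ)).nullMeasurableSet]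

lemma F_even (L θ : ℝ) :
    volume (Kbox L ∩ Cone (π/2 - θ)) = volume (Kbox L ∩ Cone θ) := by
  have hset : Kbox L ∩ Cone (π/2 - θ) =
      (fun p : ℝ × ℝ => (p.1, -p.2)) ⁻¹' (Kbox L ∩ Cone θ) := by
    ext q
    simp only [Kbox, Cone, Set.mem_inter_iff, Set.mem_setOf_eq, Set.mem_preimage,
      Real.cos_pi_div_two_sub, Real.sin_pi_div_two_sub, abs_neg]
    constructor
    · rintro ⟨⟨h1, h2⟩, h3, h4⟩
      exact ⟨⟨h1, h2⟩, by linarith, by linarith⟩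
    · rintro ⟨⟨h1, h2⟩, h3, h4⟩
      exact ⟨⟨h1, h2⟩, by linarith, by linarith⟩
  rw [hset, mp_reflY.measure_preimage
    ((measurableSet_Kbox L).inter (measurableSet_Cone θ)).nullMeasurableSet]


lemma mem_Kbox {L : ℝ} {p : ℝ × ℝ} : p ∈ Kbox L ↔ |p.1| ≤ 1/2 ∧ |p.2| ≤ L/2 := Iff.rfl
lemma mem_Cone {θ : ℝ} {p : ℝ × ℝ} : p ∈ Cone θ ↔
    Real.cos θ * p.1 - Real.sin θ * p.2 ≤ 0 ∧ Real.sin θ * p.1 + Real.cos θ * p.2 ≤ 0 := Iff.rfl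

lemma Kbox_vol_ne_top (L : ℝ) : volume (Kbox L) ≠ ⊤ := by
  have h : Kbox L ⊆ Set.Icc (-(1/2) : ℝ) (1/2) ×ˢ Set.Icc (-(L/2)) (L/2) := by
    rintro ⟨x, y⟩ ⟨h1, h2⟩
    obtain ⟨ha1, ha2⟩ := abs_le.1 h1
    obtain ⟨hb1, hb2⟩ := abs_le.1 h2
    exact ⟨Set.mem_Icc.2 ⟨ha1, ha2⟩, Set.mem_Icc.2 ⟨hb1, hb2⟩⟩
  refine fun htop => ?_
  have : volume (Set.Icc (-(1/2) : ℝ) (1/2) ×ˢ Set.Icc (-(L/2)) (L/2)) = ⊤ :=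
    top_le_iff.mp (htop ▸ measure_mono h)
  rw [Measure.volume_eq_prod, Measure.prod_prod, Real.volume_Icc, Real.volume_Icc] at this
  exact (ENNReal.mul_ne_top ENNReal.ofReal_ne_top ENNReal.ofReal_ne_top) this

lemma mem_cone_pi_div_four (q : ℝ × ℝ) :
    q ∈ Cone (π/4) ↔ q.1 ≤ q.2 ∧ q.1 + q.2 ≤ 0 := by
  have h : Real.cos (π/4) = Real.sqrt 2 / 2 := Real.cos_pi_div_four
  have h2 : Real.sin (π/4) = Real.sqrt 2 / 2 := Real.sin_pi_div_four
  have hpos : (0:ℝ) < Real.sqrt 2 / 2 := by positivity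
  rw [mem_Cone, h, h2]
  constructor
  · rintro ⟨h3, h4⟩
    constructor <;> nlinarith
  · rintro ⟨h3, h4⟩
    constructor <;> nlinarith

set_option maxHeartbeats 1000000 in
lemma core (L : ℝ) (hL : 1 < L) (t : ℝ) (ht0 : 0 < t) (ht2 : t ≤ π/2) :
    volume (Kbox L ∩ Cone (π/4)) < volume (Kbox L ∩ Cone (π/4 + t)) := by
  obtain ⟨c, hc_def⟩ : ∃ c, Real.cos (π/4 + t) = c := ⟨_, rfl⟩
  obtain ⟨s, hs_def⟩ : ∃ s, Real.sin (π/4 + t) = s := ⟨_, rfl⟩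
  have hσ : 0 < Real.sin t := Real.sin_pos_of_pos_of_lt_pi ht0 (by linarith [Real.pi_gt_three])
  have hγ : 0 ≤ Real.cos t := Real.cos_nonneg_of_mem_Icc ⟨by linarith, ht2⟩
  have hs : s = Real.sqrt 2 / 2 * (Real.cos t + Real.sin t) := by
    rw [← hs_def, Real.sin_add, Real.sin_pi_div_four, Real.cos_pi_div_four]; ring
  have hc : c = Real.sqrt 2 / 2 * (Real.cos t - Real.sin t) := by
    rw [← hc_def, Real.cos_add, Real.sin_pi_div_four, Real.cos_pi_div_four]; ring
  have hsqrt2 : (0:ℝ) < Real.sqrt 2 / 2 := by positivity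
  have hs_pos : 0 < s := by rw [hs]; nlinarith
  have hcs : c < s := by rw [hs, hc]; nlinarith
  have hcs' : -s ≤ c := by rw [hs, hc]; nlinarith
  have hconeT : ∀ p : ℝ × ℝ, p ∈ Cone (π/4 + t) ↔ c * p.1 - s * p.2 ≤ 0 ∧ s * p.1 + c * p.2 ≤ 0 := by
    intro p; rw [mem_Cone, hc_def, hs_def]
  have h2nd : ∀ q : ℝ × ℝ, q ∈ Cone (π/4) → s * q.1 + c * q.2 ≤ 0 := by
    intro q hq
    obtain ⟨h1, h2⟩ := (mem_cone_pi_div_four q).1 hq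
    rw [hs, hc]
    nlinarith
  -- choose ε
  obtain ⟨ε, hε_pos, hε1, hε2, hε3⟩ : ∃ ε : ℝ, 0 < ε ∧ ε ≤ (L-1)/2 ∧ ε ≤ 1/2 ∧
      (0 < c → s * (-(1/2) + ε) + c * (1/2 + ε) ≤ 0) := by
    rcases le_or_gt c 0 with hc0 | hc0
    · exact ⟨min ((L-1)/2) (1/2), lt_min (by linarith) (by norm_num), min_le_left _ _,
        min_le_right _ _, fun h => absurd h (not_lt.2 hc0)⟩
    · have hspc : 0 < s + c := by linarith
      refine ⟨min ((L-1)/2) (min (1/2) ((s-c)/(2*(s+c)))), ?_, min_le_left _ _,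
        le_trans (min_le_right _ _) (min_le_left _ _), ?_⟩
      · exact lt_min (by linarith) (lt_min (by norm_num) (div_pos (by linarith) (by linarith)))
      · intro _
        have h4 : min ((L-1)/2) (min (1/2) ((s-c)/(2*(s+c)))) ≤ (s-c)/(2*(s+c)) :=
          le_trans (min_le_right _ _) (min_le_right _ _)
        rw [le_div_iff₀ (by linarith : (0:ℝ) < 2*(s+c))] at h4
        nlinarith [h4]
  set B : Set (ℝ × ℝ) := Set.Ioo (-(1/2) : ℝ) (-(1/2)+ε) ×ˢ Set.Ioo (1/2 : ℝ) (1/2+ε) with hB_def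
  have hB_meas : MeasurableSet B := measurableSet_Ioo.prod measurableSet_Ioo
  have hB_pos : volume B ≠ 0 := by
    rw [hB_def, Measure.volume_eq_prod, Measure.prod_prod, Real.volume_Ioo, Real.volume_Ioo]
    simp only [add_sub_cancel_left]
    have : ENNReal.ofReal ε ≠ 0 := by simp only [ne_eq, ENNReal.ofReal_eq_zero, not_le]; linarith
    exact mul_ne_zero this this
  have hB_sub : B ⊆ (Kbox L ∩ Cone (π/4 + t)) \ Cone (π/4) := by
    rintro ⟨p1, p2⟩ hp
    simp only [hB_def, Set.mem_prod, Set.mem_Ioo] at hp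
    obtain ⟨⟨hp1l, hp1r⟩, hp2l, hp2r⟩ := hp
    have hp1neg : p1 < 0 := by linarith
    refine ⟨⟨mem_Kbox.2 ⟨?_, ?_⟩, (hconeT _).2 ⟨?_, ?_⟩⟩, ?_⟩
    · show |p1| ≤ 1/2
      rw [abs_le]; constructor <;> linarith
    · show |p2| ≤ L/2
      rw [abs_le]; constructor <;> linarith
    · rcases le_or_gt c 0 with hc0 | hc0 <;> dsimp only <;> nlinarith
    · rcases le_or_gt c 0 with hc0 | hc0 <;> dsimp only
      · nlinarith
      · nlinarith [hε3 hc0]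
    · intro hmem
      obtain ⟨h1', h2'⟩ := (mem_cone_pi_div_four _).1 hmem
      dsimp only at h1' h2'
      linarith
  have hIncl : (Kbox L ∩ Cone (π/4)) \ Cone (π/4 + t) ⊆
      (fun p : ℝ × ℝ => (p.2, -p.1)) ⁻¹'
        ((((Kbox L ∩ Cone (π/4 + t)) \ Cone (π/4)) \ B) ∪ {p : ℝ × ℝ | 1 * p.1 + 1 * p.2 = 0}) := by
    rintro ⟨q1, q2⟩ ⟨⟨hK, hC⟩, hnot⟩
    obtain ⟨hK1, hK2⟩ := mem_Kbox.1 hK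
    obtain ⟨hq1, hq2⟩ := (mem_cone_pi_div_four _).1 hC
    dsimp only at hK1 hK2 hq1 hq2
    have habs1 := abs_le.1 hK1
    have h2 := h2nd _ hC
    dsimp only at h2
    have hfail : 0 < c * q1 - s * q2 := by
      by_contra hcon
      push_neg at hcon
      exact hnot ((hconeT _).2 ⟨hcon, h2⟩)
    simp only [Set.mem_preimage]
    by_cases heq : q1 = q2
    · right
      simp only [Set.mem_setOf_eq]
      subst heq
      ring
    · left
      have hlt : q1 < q2 := lt_of_le_of_ne hq1 heq
      refine ⟨⟨⟨mem_Kbox.2 ⟨?_, ?_⟩, (hconeT _).2 ⟨?_, ?_⟩⟩, ?_⟩, ?_⟩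
      · dsimp only; rw [abs_le]; constructor <;> linarith
      · dsimp only; rw [abs_le]; constructor <;> [linarith; linarith]
      · dsimp only; linarith
      · dsimp only; nlinarith
      · intro hmem
        obtain ⟨h1', h2'⟩ := (mem_cone_pi_div_four _).1 hmem
        dsimp only at h1' h2'
        linarith
      · intro hmemB
        rw [hB_def] at hmemB
        obtain ⟨_, hB2⟩ := hmemB
        simp only [Set.mem_Ioo] at hB2
        linarith [hB2.1, habs1.1]
  -- measure bookkeeping
  have hA0_ne_top : volume (Kbox L ∩ Cone (π/4)) ≠ ⊤ := by
    intro h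
    exact Kbox_vol_ne_top L (top_le_iff.mp (h ▸ measure_mono Set.inter_subset_left))
  have hLine : volume {p : ℝ × ℝ | 1 * p.1 + 1 * p.2 = 0} = 0 :=
    line_null 1 1 0 (Or.inl one_ne_zero)
  have hTarget_meas : MeasurableSet ((((Kbox L ∩ Cone (π/4 + t)) \ Cone (π/4)) \ B) ∪
      {p : ℝ × ℝ | 1 * p.1 + 1 * p.2 = 0}) :=
    ((((measurableSet_Kbox L).inter (measurableSet_Cone _)).diff (measurableSet_Cone _)).diff
      hB_meas).union (measurableSet_eq_fun (by fun_prop) measurable_const)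
  have h4 : volume ((Kbox L ∩ Cone (π/4)) \ Cone (π/4 + t)) ≤
      volume (((Kbox L ∩ Cone (π/4 + t)) \ Cone (π/4)) \ B) :=
    calc volume ((Kbox L ∩ Cone (π/4)) \ Cone (π/4 + t))
        ≤ volume ((fun p : ℝ × ℝ => (p.2, -p.1)) ⁻¹'
            ((((Kbox L ∩ Cone (π/4 + t)) \ Cone (π/4)) \ B) ∪
              {p : ℝ × ℝ | 1 * p.1 + 1 * p.2 = 0})) := measure_mono hIncl
      _ = volume ((((Kbox L ∩ Cone (π/4 + t)) \ Cone (π/4)) \ B) ∪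
            {p : ℝ × ℝ | 1 * p.1 + 1 * p.2 = 0}) :=
          mp_rot.measure_preimage hTarget_meas.nullMeasurableSet
      _ ≤ volume (((Kbox L ∩ Cone (π/4 + t)) \ Cone (π/4)) \ B) +
            volume {p : ℝ × ℝ | 1 * p.1 + 1 * p.2 = 0} := measure_union_le _ _
      _ = volume (((Kbox L ∩ Cone (π/4 + t)) \ Cone (π/4)) \ B) := by rw [hLine, add_zero]
  have h1 : volume (Kbox L ∩ Cone (π/4)) =
      volume ((Kbox L ∩ Cone (π/4)) ∩ Cone (π/4 + t)) +
      volume ((Kbox L ∩ Cone (π/4)) \ Cone (π/4 + t)) :=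
    (measure_inter_add_diff _ (measurableSet_Cone _)).symm
  have h2' : volume (Kbox L ∩ Cone (π/4 + t)) =
      volume ((Kbox L ∩ Cone (π/4 + t)) ∩ Cone (π/4)) +
      volume ((Kbox L ∩ Cone (π/4 + t)) \ Cone (π/4)) :=
    (measure_inter_add_diff _ (measurableSet_Cone _)).symm
  have h3 : (Kbox L ∩ Cone (π/4)) ∩ Cone (π/4 + t) = (Kbox L ∩ Cone (π/4 + t)) ∩ Cone (π/4) := by
    ext p
    simp only [Set.mem_inter_iff]
    tauto
  have h5 : volume (((Kbox L ∩ Cone (π/4 + t)) \ Cone (π/4)) \ B) + volume B =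
      volume ((Kbox L ∩ Cone (π/4 + t)) \ Cone (π/4)) := by
    have hmi := measure_inter_add_diff (μ := volume) ((Kbox L ∩ Cone (π/4 + t)) \ Cone (π/4)) hB_meas
    rw [Set.inter_eq_self_of_subset_right hB_sub] at hmi
    rw [add_comm]
    exact hmi
  have hle : volume (Kbox L ∩ Cone (π/4)) + volume B ≤ volume (Kbox L ∩ Cone (π/4 + t)) := by
    calc volume (Kbox L ∩ Cone (π/4)) + volume B
        = volume ((Kbox L ∩ Cone (π/4 + t)) ∩ Cone (π/4)) +
            volume ((Kbox L ∩ Cone (π/4)) \ Cone (π/4 + t)) + volume B := by rw [h1, h3]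
      _ ≤ volume ((Kbox L ∩ Cone (π/4 + t)) ∩ Cone (π/4)) +
            volume (((Kbox L ∩ Cone (π/4 + t)) \ Cone (π/4)) \ B) + volume B := by gcongr
      _ = volume ((Kbox L ∩ Cone (π/4 + t)) ∩ Cone (π/4)) +
            (volume (((Kbox L ∩ Cone (π/4 + t)) \ Cone (π/4)) \ B) + volume B) := by
          rw [add_assoc]
      _ = volume ((Kbox L ∩ Cone (π/4 + t)) ∩ Cone (π/4)) +
            volume ((Kbox L ∩ Cone (π/4 + t)) \ Cone (π/4)) := by rw [h5]
      _ = volume (Kbox L ∩ Cone (π/4 + t)) := h2'.symm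
  exact lt_of_lt_of_le (ENNReal.lt_add_right hA0_ne_top hB_pos) hle

lemma vol_quarter (L : ℝ) (hL : 1 < L) : volume (rect (π/4) L ∩ Q) = 1/4 := by
  have hcos : Real.cos (π/4) = Real.sqrt 2 / 2 := Real.cos_pi_div_four
  have hsin : Real.sin (π/4) = Real.sqrt 2 / 2 := Real.sin_pi_div_four
  have hs2 : Real.sqrt 2 * Real.sqrt 2 = 2 := Real.mul_self_sqrt (by norm_num)
  have hs2pos : (0:ℝ) < Real.sqrt 2 := Real.sqrt_pos.2 (by norm_num)
  set a : ℝ := Real.sqrt 2 / 2 with ha_def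
  have ha_pos : 0 < a := by positivity
  have haa : a * a = 1/2 := by rw [ha_def]; nlinarith
  -- set identification
  have hset : rect (π/4) L ∩ Q =
      {p : ℝ × ℝ | p.1 ∈ Set.Icc (-a) 0 ∧ p.2 ∈ Set.Icc (-a - p.1) 0} := by
    ext ⟨x, y⟩
    simp only [rect, Q, Set.mem_inter_iff, Set.mem_setOf_eq, hcos, hsin, Set.mem_Icc]
    constructor
    · rintro ⟨⟨h1, _⟩, hx, hy⟩
      obtain ⟨h1a, h1b⟩ := abs_le.1 h1
      -- a(x+y) ≥ -1/2  ⇒ x + y ≥ -a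
      have hxy : -a ≤ x + y := by nlinarith
      refine ⟨⟨by linarith, hx⟩, ⟨by linarith, hy⟩⟩
    · rintro ⟨⟨hx1, hx2⟩, hy1, hy2⟩
      have hxy : -a ≤ x + y := by linarith
      have hxy2 : x + y ≤ 0 := by linarith
      refine ⟨⟨?_, ?_⟩, hx2, hy2⟩
      · rw [abs_le]; constructor <;> nlinarith
      · rw [abs_le]
        have hyx : |y - x| ≤ -(x+y) := by
          rw [abs_le]; constructor <;> linarith
        obtain ⟨hz1, hz2⟩ := abs_le.1 hyx
        constructor <;> nlinarith
    -- Fubini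
  rw [hset]
  have hmeas : MeasurableSet {p : ℝ × ℝ | p.1 ∈ Set.Icc (-a) 0 ∧ p.2 ∈ Set.Icc (-a - p.1) 0} := by
    rw [Set.setOf_and]
    refine MeasurableSet.inter ?_ ?_
    · exact measurable_fst measurableSet_Icc
    · rw [show {p : ℝ × ℝ | p.2 ∈ Set.Icc (-a - p.1) 0} =
        {p : ℝ × ℝ | -a - p.1 ≤ p.2} ∩ {p : ℝ × ℝ | p.2 ≤ 0} from rfl]
      exact (measurableSet_le (by fun_prop) (by fun_prop)).inter
        (measurableSet_le (by fun_prop) (by fun_prop))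
  rw [Measure.volume_eq_prod, Measure.prod_apply hmeas]
  have hsec : (fun x : ℝ => volume (Prod.mk x ⁻¹' {p : ℝ × ℝ | p.1 ∈ Set.Icc (-a) 0 ∧
      p.2 ∈ Set.Icc (-a - p.1) 0})) =
      fun x => Set.indicator (Set.Icc (-a) 0) (fun x => ENNReal.ofReal (x + a)) x := by
    funext x
    by_cases hx : x ∈ Set.Icc (-a) 0
    · have : Prod.mk x ⁻¹' {p : ℝ × ℝ | p.1 ∈ Set.Icc (-a) 0 ∧ p.2 ∈ Set.Icc (-a - p.1) 0} =
          Set.Icc (-a - x) 0 := by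
        ext y
        simp only [Set.mem_preimage, Set.mem_setOf_eq, Set.mem_Icc]
        constructor
        · rintro ⟨_, hy⟩; exact hy
        · intro hy
          exact ⟨Set.mem_Icc.1 hx, hy⟩
      rw [this, Real.volume_Icc, Set.indicator_of_mem hx]
      ring_nf
    · have : Prod.mk x ⁻¹' {p : ℝ × ℝ | p.1 ∈ Set.Icc (-a) 0 ∧ p.2 ∈ Set.Icc (-a - p.1) 0} =
          (∅ : Set ℝ) := by
        ext y
        simp only [Set.mem_preimage, Set.mem_setOf_eq, Set.mem_empty_iff_false, iff_false]
        rintro ⟨h, _⟩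
        exact hx h
      rw [this, Set.indicator_of_notMem hx, measure_empty]
  rw [hsec, lintegral_indicator measurableSet_Icc]
  have hint : Integrable (fun x : ℝ => x + a) (volume.restrict (Set.Icc (-a) 0)) := by
    apply Continuous.integrableOn_Icc
    continuity
  have hnn : 0 ≤ᶠ[ae (volume.restrict (Set.Icc (-a) 0))] (fun x : ℝ => x + a) := by
    filter_upwards [ae_restrict_mem measurableSet_Icc] with x hx
    have := (Set.mem_Icc.1 hx).1
    simp only [Pi.zero_apply]
    linarith
  rw [← MeasureTheory.ofReal_integral_eq_lintegral_ofReal hint hnn]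
  have : ∫ x in Set.Icc (-a) 0, (x + a) = 1/4 := by
    rw [MeasureTheory.integral_Icc_eq_integral_Ioc, ← intervalIntegral.integral_of_le (by linarith)]
    rw [intervalIntegral.integral_add intervalIntegral.intervalIntegrable_id
      intervalIntegrable_const]
    rw [integral_id, intervalIntegral.integral_const]
    simp only [smul_eq_mul]
    nlinarith
  rw [this]
  rw [ENNReal.ofReal_div_of_pos (by norm_num)]
  norm_num

lemma measurableSet_rect (θ L : ℝ) : MeasurableSet (rect θ L) := by
  unfold rect
  rw [Set.setOf_and]
  exact (measurableSet_le (by fun_prop) measurable_const).inter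
    (measurableSet_le (by fun_prop) measurable_const)

lemma measurableSet_Q : MeasurableSet Q := by
  unfold Q
  rw [Set.setOf_and]
  exact (measurableSet_le (by fun_prop) measurable_const).inter
    (measurableSet_le (by fun_prop) measurable_const)

lemma continuity_part (L : ℝ) (hL : 1 < L) :
    Continuous (fun θ : ℝ => (volume (rect θ L ∩ Q)).toReal) := by
  rw [continuous_iff_continuousAt]
  intro θ₀
  have hrw : ∀ θ : ℝ, (volume (rect θ L ∩ Q)).toReal =
      ∫ p : ℝ × ℝ, (rect θ L ∩ Q).indicator (fun _ => (1:ℝ)) p := by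
    intro θ
    rw [show ((rect θ L ∩ Q).indicator (fun _ => (1:ℝ))) = (rect θ L ∩ Q).indicator 1 from rfl]
    rw [integral_indicator_one ((measurableSet_rect θ L).inter measurableSet_Q)]
    rfl
  simp only [ContinuousAt, hrw]
  -- dominated convergence
  have hbound_meas : MeasurableSet (Set.Icc (-L) L ×ˢ Set.Icc (-L) L) :=
    measurableSet_Icc.prod measurableSet_Icc
  apply MeasureTheory.tendsto_integral_filter_of_dominated_convergence
    ((Set.Icc (-L) L ×ˢ Set.Icc (-L) L).indicator (fun _ => (1:ℝ)))
  · filter_upwards with θ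
    exact ((stronglyMeasurable_const.indicator
      ((measurableSet_rect θ L).inter measurableSet_Q))).aestronglyMeasurable
  · filter_upwards with θ
    filter_upwards with p
    by_cases hp : p ∈ rect θ L ∩ Q
    · rw [Set.indicator_of_mem hp]
      have hpB : p ∈ Set.Icc (-L) L ×ˢ Set.Icc (-L) L := by
        obtain ⟨⟨h1, h2⟩, _⟩ := hp
        obtain ⟨h1a, h1b⟩ := abs_le.1 h1
        obtain ⟨h2a, h2b⟩ := abs_le.1 h2
        have key : p.1^2 + p.2^2 ≤ L^2 := by
          have e : (Real.cos θ * p.1 + Real.sin θ * p.2)^2 +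
              ((-Real.sin θ) * p.1 + Real.cos θ * p.2)^2 = p.1^2 + p.2^2 := by
            have := Real.sin_sq_add_cos_sq θ
            nlinarith [this]
          nlinarith [e]
        constructor
        · rw [Set.mem_Icc]
          constructor <;> nlinarith [sq_nonneg p.2, sq_nonneg (p.1 - L), sq_nonneg (p.1 + L)]
        · rw [Set.mem_Icc]
          constructor <;> nlinarith [sq_nonneg p.1, sq_nonneg (p.2 - L), sq_nonneg (p.2 + L)]
      rw [Set.indicator_of_mem hpB]
      simp
    · rw [Set.indicator_of_notMem hp]
      simp only [norm_zero]
      by_cases hb : p ∈ Set.Icc (-L) L ×ˢ Set.Icc (-L) L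
      · rw [Set.indicator_of_mem hb]; norm_num
      · rw [Set.indicator_of_notMem hb]
  · rw [MeasureTheory.integrable_indicator_iff hbound_meas]
    refine integrableOn_const ?_
    rw [Measure.volume_eq_prod, Measure.prod_prod, Real.volume_Icc]
    exact (ENNReal.mul_lt_top ENNReal.ofReal_lt_top ENNReal.ofReal_lt_top).ne
  · -- a.e. convergence
    have hN : volume ({p : ℝ × ℝ | Real.cos θ₀ * p.1 + Real.sin θ₀ * p.2 = 1/2} ∪
        ({p : ℝ × ℝ | Real.cos θ₀ * p.1 + Real.sin θ₀ * p.2 = -(1/2)} ∪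
        ({p : ℝ × ℝ | (-Real.sin θ₀) * p.1 + Real.cos θ₀ * p.2 = L/2} ∪
        {p : ℝ × ℝ | (-Real.sin θ₀) * p.1 + Real.cos θ₀ * p.2 = -(L/2)}))) = 0 := by
      have hcs : Real.cos θ₀ ≠ 0 ∨ Real.sin θ₀ ≠ 0 := by
        by_contra hcon
        push_neg at hcon
        have := Real.sin_sq_add_cos_sq θ₀
        rw [hcon.1, hcon.2] at this
        norm_num at this
      have hcs2 : -Real.sin θ₀ ≠ 0 ∨ Real.cos θ₀ ≠ 0 := by
        rcases hcs with h | h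
        · exact Or.inr h
        · exact Or.inl (neg_ne_zero.2 h)
      refine measure_union_null (line_null _ _ _ hcs) (measure_union_null
        (line_null _ _ _ hcs) (measure_union_null (line_null _ _ _ hcs2)
        (line_null _ _ _ hcs2)))
    rw [← MeasureTheory.compl_mem_ae_iff] at hN
    filter_upwards [hN] with p hp
    simp only [Set.mem_compl_iff, Set.mem_union, Set.mem_setOf_eq, not_or] at hp
    obtain ⟨hp1, hp2, hp3, hp4⟩ := hp
    -- the indicator is eventually constant in θ near θ₀
    have hcont1 : Continuous (fun θ : ℝ => |Real.cos θ * p.1 + Real.sin θ * p.2|) :=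
      ((Real.continuous_cos.mul continuous_const).add
        (Real.continuous_sin.mul continuous_const)).abs
    have hcont2 : Continuous (fun θ : ℝ => |(-Real.sin θ) * p.1 + Real.cos θ * p.2|) :=
      ((Real.continuous_sin.neg.mul continuous_const).add
        (Real.continuous_cos.mul continuous_const)).abs
    have habs1 : |Real.cos θ₀ * p.1 + Real.sin θ₀ * p.2| ≠ 1/2 := by
      intro h
      rcases abs_eq (by norm_num : (0:ℝ) ≤ 1/2) |>.1 h with h' | h'
      · exact hp1 h'
      · exact hp2 h'
    have habs2 : |(-Real.sin θ₀) * p.1 + Real.cos θ₀ * p.2| ≠ L/2 := by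
      intro h
      rcases abs_eq (by linarith : (0:ℝ) ≤ L/2) |>.1 h with h' | h'
      · exact hp3 h'
      · exact hp4 h'
    have hev : ∀ᶠ θ in nhds θ₀, ((rect θ L ∩ Q).indicator (fun _ => (1:ℝ))) p =
        ((rect θ₀ L ∩ Q).indicator (fun _ => (1:ℝ))) p := by
      by_cases hin : p ∈ rect θ₀ L
      · obtain ⟨h1, h2⟩ := hin
        have h1' : |Real.cos θ₀ * p.1 + Real.sin θ₀ * p.2| < 1/2 := lt_of_le_of_ne h1 habs1
        have h2' : |(-Real.sin θ₀) * p.1 + Real.cos θ₀ * p.2| < L/2 := lt_of_le_of_ne h2 habs2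
        have e1 := (hcont1.continuousAt (x := θ₀)).eventually_lt_const h1'
        have e2 := (hcont2.continuousAt (x := θ₀)).eventually_lt_const h2'
        filter_upwards [e1, e2] with θ he1 he2
        have : p ∈ rect θ L := ⟨le_of_lt he1, le_of_lt he2⟩
        by_cases hq : p ∈ Q
        · have hmem : p ∈ rect θ L ∩ Q := ⟨this, hq⟩
          have hmem0 : p ∈ rect θ₀ L ∩ Q := ⟨⟨h1, h2⟩, hq⟩
          rw [Set.indicator_of_mem hmem, Set.indicator_of_mem hmem0]
        · rw [Set.indicator_of_notMem (fun hm => hq hm.2),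
            Set.indicator_of_notMem (fun hm => hq hm.2)]
      · have : 1/2 < |Real.cos θ₀ * p.1 + Real.sin θ₀ * p.2| ∨
            L/2 < |(-Real.sin θ₀) * p.1 + Real.cos θ₀ * p.2| := by
          by_contra hcon
          push_neg at hcon
          exact hin ⟨hcon.1, hcon.2⟩
        rcases this with h | h
        · have e1 := (hcont1.continuousAt (x := θ₀)).eventually_const_lt h
          filter_upwards [e1] with θ he1
          rw [Set.indicator_of_notMem (fun hm => absurd hm.1.1 (not_le.2 he1)),
            Set.indicator_of_notMem (fun hm => hin hm.1)]
        · have e2 := (hcont2.continuousAt (x := θ₀)).eventually_const_lt h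
          filter_upwards [e2] with θ he2
          rw [Set.indicator_of_notMem (fun hm => absurd hm.1.2 (not_le.2 he2)),
            Set.indicator_of_notMem (fun hm => hin hm.1)]
    exact Filter.Tendsto.congr' (Filter.EventuallyEq.symm hev) tendsto_const_nhds


lemma strict_min (L : ℝ) (hL : 1 < L) (θ : ℝ) (hθ : ¬∃ k : ℤ, θ = π / 4 + k * π) :
    volume (Kbox L ∩ Cone (π/4)) < volume (Kbox L ∩ Cone θ) := by
  have hπ : (0:ℝ) < π := Real.pi_pos
  set t : ℝ := θ - π/4 with ht_def
  have hθt : θ = π/4 + t := by rw [ht_def]; ring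
  have hper : Function.Periodic (fun x : ℝ => volume (Kbox L ∩ Cone x)) π :=
    fun x => F_periodic L x
  set n : ℤ := ⌊t / π⌋ with hn_def
  set t' : ℝ := t - n * π with ht'_def
  have ht'0 : 0 ≤ t' := by
    rw [ht'_def]
    have h := Int.floor_le (t / π)
    rw [le_div_iff₀ hπ] at h
    rw [← hn_def] at h
    linarith
  have ht'1 : t' < π := by
    rw [ht'_def]
    have h := Int.lt_floor_add_one (t / π)
    rw [div_lt_iff₀ hπ] at h
    rw [← hn_def] at h
    nlinarith [h]
  have ht'ne : t' ≠ 0 := by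
    intro h
    apply hθ
    refine ⟨n, ?_⟩
    rw [ht'_def] at h
    rw [hθt]
    have : t = n * π := by linarith
    rw [this]
  have hval : volume (Kbox L ∩ Cone θ) = volume (Kbox L ∩ Cone (π/4 + t')) := by
    have := hper.sub_int_mul_eq (x := π/4 + t) n
    have harg : π/4 + t - n * π = π/4 + t' := by rw [ht'_def]; ring
    rw [harg] at this
    rw [hθt, ← this]
  rw [hval]
  rcases le_or_gt t' (π/2) with hc | hc
  · exact core L hL t' (lt_of_le_of_ne ht'0 (Ne.symm ht'ne)) hc
  · set t'' : ℝ := π - t' with ht''_def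
    have ht''0 : 0 < t'' := by rw [ht''_def]; linarith
    have ht''2 : t'' ≤ π/2 := by rw [ht''_def]; linarith
    have e1 : volume (Kbox L ∩ Cone (π/4 + t')) = volume (Kbox L ∩ Cone (π/4 - t'')) := by
      have := hper (π/4 - t'')
      have harg : π/4 - t'' + π = π/4 + t' := by rw [ht''_def]; ring
      rw [harg] at this
      simpa using this
    have e2 : volume (Kbox L ∩ Cone (π/4 - t'')) = volume (Kbox L ∩ Cone (π/4 + t'')) := by
      have := F_even L (π/4 + t'')
      have harg : π/2 - (π/4 + t'') = π/4 - t'' := by ring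
      rw [harg] at this
      exact this
    rw [e1, e2]
    exact core L hL t'' ht''0 ht''2

/-- For a `1 × L` laptop (`L > 1`) centered at the corner of a quarter-plane, the
footprint area `A(θ)` is a continuous function of the orientation `θ`, equals `1/4` at the
symmetric position `θ = π/4`, and is strictly greater than `1/4` for every orientation not
equivalent to the symmetric position (modulo the symmetries of the rectangle). -/
theorem corner_area_continuous_strict_min (L : ℝ) (hL : 1 < L) :
    Continuous (fun θ : ℝ => (volume (rect θ L ∩ Q)).toReal) ∧
      volume (rect (π / 4) L ∩ Q) = 1 / 4 ∧
      ∀ θ : ℝ, (¬∃ k : ℤ, θ = π / 4 + k * π) → volume (rect θ L ∩ Q) > 1 / 4 := by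
  refine ⟨continuity_part L hL, vol_quarter L hL, ?_⟩
  intro θ hθ
  have h1 : volume (rect θ L ∩ Q) = volume (Kbox L ∩ Cone θ) := vol_frame θ L
  have h2 : volume (rect (π/4) L ∩ Q) = volume (Kbox L ∩ Cone (π/4)) := vol_frame (π/4) L
  have h3 := strict_min L hL θ hθ
  calc (1/4 : ENNReal) = volume (rect (π/4) L ∩ Q) := (vol_quarter L hL).symm
    _ = volume (Kbox L ∩ Cone (π/4)) := h2
    _ < volume (Kbox L ∩ Cone θ) := h3
    _ = volume (rect θ L ∩ Q) := h1.symm
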